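/- Let r > 0 and let Γ_r = {m + n·i·r : m, n ∈ ℤ} be the rectangular lattice generated by (1, ir). Then there exists a nonconstant function g that is meromorphic on all of ℂ, is doubly periodic with respect to Γ_r (g(z + ω) = g(z) for all z and all ω ∈ Γ_r at points where g is defined), whose poles in the fundamental domain [0,1) × [0,r) have total order 4 (counted with multiplicity), and which satisfies g(conj(z) + 1/2) = −1/conj(g(z)) for every z ∈ ℂ at which g is analytic with g(z) ≠ 0 and at which g is analytic at conj(z) + 1/2. -/

import Mathlib

open Complex Filter

noncomputable section
namespace Stmt12

/-- `q = exp(-2πr)` -/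
def q (r : ℝ) : ℝ := Real.exp (-(2 * Real.pi * r))

lemma q_pos (r : ℝ) : 0 < q r := Real.exp_pos _

lemma q_lt_one {r : ℝ} (hr : 0 < r) : q r < 1 := by
  rw [q, Real.exp_lt_one_iff]
  have := Real.pi_pos
  nlinarith

/-- `w z = exp(2πiz)` -/
def w (z : ℂ) : ℂ := Complex.exp (2 * Real.pi * I * z)

lemma w_ne_zero (z : ℂ) : w z ≠ 0 := Complex.exp_ne_zero _

lemma w_add (a b : ℂ) : w (a + b) = w a * w b := by
  rw [w, w, w, ← Complex.exp_add]; ring_nf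

lemma w_mul_w_neg (z : ℂ) : w z * w (-z) = 1 := by
  rw [← w_add]; simp [w]

/-- The series of logs defining the tail of the product. -/
def L (r : ℝ) (v : ℂ) : ℂ := ∑' n : ℕ, Complex.log (1 - (q r : ℂ) ^ (n + 1) * v)

section Qdef
variable {r : ℝ}

lemma norm_term_le (hr : 0 < r) {v : ℂ} (hv : ‖v‖ ≤ 1 / 2) (n : ℕ) :
    ‖(q r : ℂ) ^ (n + 1) * v‖ ≤ (1 / 2) * q r ^ (n + 1) := by
  have h0 := q_pos r
  have h1 := q_lt_one hr
  rw [norm_mul, norm_pow, Complex.norm_real, Real.norm_eq_abs, abs_of_pos h0]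
  calc q r ^ (n+1) * ‖v‖ ≤ q r ^ (n+1) * (1/2) := by
        apply mul_le_mul_of_nonneg_left hv (by positivity)
    _ = (1/2) * q r ^ (n+1) := by ring

lemma norm_term_lt_one (hr : 0 < r) {v : ℂ} (hv : ‖v‖ ≤ 1 / 2) (n : ℕ) :
    ‖(q r : ℂ) ^ (n + 1) * v‖ < 1 := by
  refine lt_of_le_of_lt (norm_term_le hr hv n) ?_
  have h0 := q_pos r
  have h1 := q_lt_one hr
  have : q r ^ (n+1) ≤ 1 := pow_le_one₀ h0.le h1.le
  nlinarith

lemma term_ne_zero (hr : 0 < r) {v : ℂ} (hv : ‖v‖ ≤ 1 / 2) (n : ℕ) :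
    (1 : ℂ) - (q r : ℂ) ^ (n + 1) * v ≠ 0 := by
  intro h
  have h2 := norm_term_lt_one hr hv n
  rw [sub_eq_zero] at h
  rw [← h] at h2
  simp at h2

lemma norm_log_term_le (hr : 0 < r) {v : ℂ} (hv : ‖v‖ ≤ 1 / 2) (n : ℕ) :
    ‖Complex.log (1 - (q r : ℂ) ^ (n + 1) * v)‖ ≤ (3 / 4) * q r ^ (n + 1) := by
  have h1 : ‖-((q r : ℂ) ^ (n + 1) * v)‖ ≤ 1 / 2 := by
    rw [norm_neg]
    refine le_trans (norm_term_le hr hv n) ?_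
    have h0 := q_pos r
    have := pow_le_one₀ h0.le (q_lt_one hr).le (n := n+1)
    nlinarith
  have := Complex.norm_log_one_add_half_le_self h1
  rw [← sub_eq_add_neg] at this
  refine this.trans ?_
  rw [norm_neg]
  have := norm_term_le hr hv n
  nlinarith

lemma summable_M (hr : 0 < r) : Summable (fun n : ℕ => (3 / 4) * q r ^ (n + 1)) := by
  apply Summable.mul_left
  exact (summable_geometric_of_lt_one (q_pos r).le (q_lt_one hr)).comp_injective
    (add_left_injective 1)

lemma summable_log (hr : 0 < r) {v : ℂ} (hv : ‖v‖ ≤ 1 / 2) :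
    Summable (fun n : ℕ => Complex.log (1 - (q r : ℂ) ^ (n + 1) * v)) :=
  (summable_M hr).of_norm_bounded (norm_log_term_le hr hv)

/-- L is analytic on the open ball of radius 1/2. -/
lemma analyticAt_L (hr : 0 < r) {v : ℂ} (hv : ‖v‖ < 1 / 2) : AnalyticAt ℂ (L r) v := by
  have hball : Metric.ball (0 : ℂ) (1/2) ∈ nhds v := by
    apply Metric.isOpen_ball.mem_nhds; simpa [Metric.mem_ball] using hv
  apply DifferentiableOn.analyticAt (s := Metric.ball (0:ℂ) (1/2)) ?_ hball
  have : TendstoLocallyUniformlyOn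
      (fun (N : Finset ℕ) (u : ℂ) => ∑ n ∈ N, Complex.log (1 - (q r : ℂ) ^ (n + 1) * u))
      (L r) Filter.atTop (Metric.ball (0:ℂ) (1/2)) := by
    apply TendstoUniformlyOn.tendstoLocallyUniformlyOn
    apply tendstoUniformlyOn_tsum (summable_M hr)
    intro n u hu
    exact norm_log_term_le hr (mem_ball_zero_iff.mp hu).le n
  apply this.differentiableOn ?_ Metric.isOpen_ball
  apply Filter.Eventually.of_forall
  intro N u hu
  apply DifferentiableAt.differentiableWithinAt
  apply DifferentiableAt.fun_sum
  intro n _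
  apply DifferentiableAt.clog
  · fun_prop
  · rw [sub_eq_add_neg]
    apply Complex.mem_slitPlane_of_norm_lt_one
    rw [norm_neg]
    exact norm_term_lt_one hr (mem_ball_zero_iff.mp hu).le n

lemma L_shift (hr : 0 < r) {v : ℂ} (hv : ‖v‖ ≤ 1 / 2) :
    L r v = Complex.log (1 - (q r : ℂ) * v) + L r ((q r : ℂ) * v) := by
  have hqv : ‖(q r : ℂ) * v‖ ≤ 1 / 2 := by
    have := norm_term_le hr hv 0
    simp only [zero_add, pow_one] at this
    have h1 := pow_le_one₀ (q_pos r).le (q_lt_one hr).le (n := 1)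
    simp only [pow_one] at h1
    calc ‖(q r:ℂ) * v‖ = ‖(q r:ℂ)^(0+1) * v‖ := by norm_num
      _ ≤ (1/2) * q r ^ (0+1) := norm_term_le hr hv 0
      _ ≤ 1/2 := by nlinarith [q_pos r, (q_lt_one hr)]
  rw [L, (summable_log hr hv).tsum_eq_zero_add]
  congr 1
  · norm_num
  · rw [L]
    congr 1
    ext n
    congr 2
    ring

end Qdef

/-- Partial-product representation. -/
def F (r : ℝ) (N : ℕ) (v : ℂ) : ℂ :=
  (∏ n ∈ Finset.range N, (1 - (q r : ℂ) ^ (n + 1) * v)) * Complex.exp (L r ((q r : ℂ) ^ N * v))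

section Fprops
variable {r : ℝ}

lemma F_succ (hr : 0 < r) {v : ℂ} {N : ℕ} (h : q r ^ N * ‖v‖ ≤ 1 / 2) :
    F r (N + 1) v = F r N v := by
  have hnv : ‖(q r : ℂ) ^ N * v‖ ≤ 1 / 2 := by
    rw [norm_mul, norm_pow, Complex.norm_real, Real.norm_eq_abs, abs_of_pos (q_pos r)]
    exact h
  rw [F, F, Finset.prod_range_succ, L_shift hr hnv, Complex.exp_add, Complex.exp_log]
  · rw [show (q r:ℂ) * ((q r:ℂ)^N * v) = (q r:ℂ)^(N+1) * v by ring]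
    ring
  · have : ‖(q r : ℂ) * ((q r : ℂ) ^ N * v)‖ ≤ 1/2 := by
      have h0 := q_pos r
      have h1 := q_lt_one hr
      rw [norm_mul, Complex.norm_real, Real.norm_eq_abs, abs_of_pos h0]
      nlinarith [norm_nonneg ((q r : ℂ)^N * v), hnv]
    intro hcon
    rw [sub_eq_zero] at hcon
    rw [← hcon] at this
    simp only [norm_one] at this
    norm_num at this

lemma F_stable (hr : 0 < r) {v : ℂ} {N : ℕ} (h : q r ^ N * ‖v‖ ≤ 1 / 2) :
    ∀ M, N ≤ M → F r M v = F r N v := by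
  intro M hM
  induction M with
  | zero => have : N = 0 := by omega
            rw [this]
  | succ M ih =>
    rcases Nat.lt_or_ge N (M+1) with h1 | h2
    · have hNM : N ≤ M := by omega
      rw [← ih hNM]
      apply F_succ hr
      calc q r ^ M * ‖v‖ ≤ q r ^ N * ‖v‖ := by
            apply mul_le_mul_of_nonneg_right _ (norm_nonneg v)
            exact pow_le_pow_of_le_one (q_pos r).le (q_lt_one hr).le hNM
        _ ≤ 1/2 := h
    · have : N = M + 1 := by omega
      rw [this]

lemma exists_N (hr : 0 < r) (c : ℝ) : ∃ N : ℕ, q r ^ N * c ≤ 1 / 2 := by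
  rcases le_or_gt c 0 with hc | hc
  · exact ⟨0, by nlinarith⟩
  · obtain ⟨N, hN⟩ := exists_pow_lt_of_lt_one (show (0:ℝ) < 1/(2*c) by positivity) (q_lt_one hr)
    refine ⟨N, ?_⟩
    rw [lt_div_iff₀ (by positivity)] at hN
    nlinarith

open Classical in
/-- The infinite product `∏ (1 - q^(n+1) v)`, defined via a stable finite stage. -/
def Q (r : ℝ) (v : ℂ) : ℂ :=
  if h : ∃ N : ℕ, q r ^ N * ‖v‖ ≤ 1 / 2 then F r (Nat.find h) v else 0

lemma Q_eq_F (hr : 0 < r) {v : ℂ} {N : ℕ} (h : q r ^ N * ‖v‖ ≤ 1 / 2) :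
    Q r v = F r N v := by
  have hex : ∃ N : ℕ, q r ^ N * ‖v‖ ≤ 1 / 2 := ⟨N, h⟩
  rw [Q, dif_pos hex]
  have h2 := Nat.find_spec hex
  calc F r (Nat.find hex) v
      = F r (max N (Nat.find hex)) v := (F_stable hr h2 _ (le_max_right _ _)).symm
    _ = F r N v := F_stable hr h _ (le_max_left _ _)

lemma Q_fun_eq (hr : 0 < r) (v : ℂ) : Q r v = (1 - (q r : ℂ) * v) * Q r ((q r : ℂ) * v) := by
  obtain ⟨N, hN⟩ := exists_N hr ‖v‖
  have hq0 := q_pos r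
  have hN1 : q r ^ (N + 1) * ‖v‖ ≤ 1 / 2 := by
    have : q r ^ (N+1) ≤ q r ^ N := pow_le_pow_of_le_one hq0.le (q_lt_one hr).le (by omega)
    nlinarith [norm_nonneg v]
  have hqv : q r ^ N * ‖(q r : ℂ) * v‖ ≤ 1 / 2 := by
    rw [norm_mul, Complex.norm_real, Real.norm_eq_abs, abs_of_pos hq0]
    calc q r ^ N * (q r * ‖v‖) = q r ^ (N+1) * ‖v‖ := by ring
      _ ≤ 1/2 := hN1
  rw [Q_eq_F hr hN1, Q_eq_F hr hqv, F, F]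
  rw [Finset.prod_range_succ']
  have harg : (q r : ℂ) ^ N * ((q r : ℂ) * v) = (q r : ℂ) ^ (N+1) * v := by ring
  rw [harg]
  have : ∀ n ∈ Finset.range N, (1 - (q r:ℂ) ^ (n + 1 + 1) * v) = (1 - (q r:ℂ)^(n+1) * ((q r:ℂ) * v)) := by
    intro n _; ring_nf
  rw [Finset.prod_congr rfl this]
  ring

lemma analyticAt_Q (hr : 0 < r) (v₀ : ℂ) : AnalyticAt ℂ (Q r) v₀ := by
  obtain ⟨N, hN⟩ := exists_N hr (‖v₀‖ + 1)
  have hq0 := q_pos r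
  have hqN : 0 < q r ^ N := by positivity
  -- F r N is analytic at v₀
  have hF : AnalyticAt ℂ (F r N) v₀ := by
    apply AnalyticAt.mul
    · apply Finset.analyticAt_fun_prod _
      intro n _
      exact analyticAt_const.sub (analyticAt_const.mul (analyticAt_id))
    · have h1 : AnalyticAt ℂ (fun v : ℂ => (q r : ℂ)^N * v) v₀ :=
        analyticAt_const.mul analyticAt_id
      have h2 : AnalyticAt ℂ (L r) ((q r:ℂ)^N * v₀) := by
        apply analyticAt_L hr
        rw [norm_mul, norm_pow, Complex.norm_real, Real.norm_eq_abs, abs_of_pos hq0]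
        nlinarith
      exact (h2.comp h1).cexp
  apply hF.congr
  have : ∀ᶠ u in nhds v₀, u ∈ Metric.ball v₀ 1 :=
    Metric.isOpen_ball.mem_nhds (by simp)
  filter_upwards [this] with u hu
  have : ‖u‖ ≤ ‖v₀‖ + 1 := by
    have := mem_ball_iff_norm.mp hu
    calc ‖u‖ = ‖v₀ + (u - v₀)‖ := by ring_nf
      _ ≤ ‖v₀‖ + ‖u - v₀‖ := norm_add_le _ _
      _ ≤ ‖v₀‖ + 1 := by linarith
  exact (Q_eq_F hr (by nlinarith [norm_nonneg u])).symm

lemma Q_ne_zero (hr : 0 < r) {v : ℂ} (h : ∀ n : ℕ, (q r : ℂ) ^ (n + 1) * v ≠ 1) :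
    Q r v ≠ 0 := by
  obtain ⟨N, hN⟩ := exists_N hr ‖v‖
  rw [Q_eq_F hr hN, F]
  apply mul_ne_zero
  · apply Finset.prod_ne_zero_iff.mpr
    intro n _
    rw [sub_ne_zero]
    exact fun hc => h n hc.symm
  · exact Complex.exp_ne_zero _

lemma Q_eq_zero_iff (hr : 0 < r) {v : ℂ} :
    Q r v = 0 ↔ ∃ n : ℕ, (q r : ℂ) ^ (n + 1) * v = 1 := by
  constructor
  · intro h
    by_contra hc
    push_neg at hc
    exact Q_ne_zero hr hc h
  · rintro ⟨n, hn⟩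
    obtain ⟨N₀, hN₀⟩ := exists_N hr ‖v‖
    set N := max N₀ (n + 1) with hNdef
    have hN : q r ^ N * ‖v‖ ≤ 1 / 2 := by
      calc q r ^ N * ‖v‖ ≤ q r ^ N₀ * ‖v‖ := by
            apply mul_le_mul_of_nonneg_right _ (norm_nonneg v)
            exact pow_le_pow_of_le_one (q_pos r).le (q_lt_one hr).le (le_max_left _ _)
        _ ≤ 1/2 := hN₀
    rw [Q_eq_F hr hN, F]
    apply mul_eq_zero_of_left
    apply Finset.prod_eq_zero (i := n)
    · rw [Finset.mem_range]; omega
    · rw [sub_eq_zero, hn]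

lemma Q_one_ne_zero (hr : 0 < r) : Q r 1 ≠ 0 := by
  apply Q_ne_zero hr
  intro n hc
  have : ‖(q r : ℂ) ^ (n+1) * 1‖ < 1 := by
    rw [mul_one, norm_pow, Complex.norm_real, Real.norm_eq_abs, abs_of_pos (q_pos r)]
    exact pow_lt_one₀ (q_pos r).le (q_lt_one hr) (by omega)
  rw [hc] at this
  simp at this

lemma L_conj (hr : 0 < r) {u : ℂ} (hu : ‖u‖ ≤ 1 / 2) :
    L r ((starRingEnd ℂ) u) = (starRingEnd ℂ) (L r u) := by
  have hcu : ‖(starRingEnd ℂ) u‖ ≤ 1 / 2 := by rwa [RingHomIsometric.norm_map]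
  have hmap : (starRingEnd ℂ) (∑' (n : ℕ), Complex.log (1 - (q r:ℂ)^(n+1) * u))
      = ∑' (n : ℕ), (starRingEnd ℂ) (Complex.log (1 - (q r:ℂ)^(n+1) * u)) :=
    Complex.conjCLE.map_tsum
  rw [L, L, hmap]
  apply tsum_congr
  intro n
  have harg : (1 : ℂ) - (q r : ℂ)^(n+1) * (starRingEnd ℂ) u
      = (starRingEnd ℂ) (1 - (q r : ℂ)^(n+1) * u) := by
    rw [map_sub, map_one, map_mul, map_pow, Complex.conj_ofReal]
  rw [harg]
  apply Complex.log_conj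
  intro hc
  have hre : (1 - (q r : ℂ)^(n+1) * u).re ≤ 0 := by
    rw [Complex.arg_eq_pi_iff] at hc
    linarith [hc.1]
  have h2 : ‖(q r : ℂ)^(n+1) * u‖ ≤ 1/2 := by
    calc ‖(q r : ℂ)^(n+1) * u‖ ≤ (1/2) * q r ^ (n+1) := norm_term_le hr hu n
      _ ≤ 1/2 * 1 := by
        have := pow_le_one₀ (q_pos r).le (q_lt_one hr).le (n := n+1)
        nlinarith
      _ = 1/2 := by ring
  have h3 : |((q r : ℂ)^(n+1) * u).re| ≤ 1/2 := by
    refine le_trans (Complex.abs_re_le_norm _) h2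
  rw [Complex.sub_re, Complex.one_re] at hre
  have := abs_le.mp h3
  linarith [this.1, this.2]

lemma Q_conj (hr : 0 < r) (v : ℂ) : Q r ((starRingEnd ℂ) v) = (starRingEnd ℂ) (Q r v) := by
  obtain ⟨N, hN⟩ := exists_N hr ‖v‖
  have hNc : q r ^ N * ‖(starRingEnd ℂ) v‖ ≤ 1 / 2 := by rwa [RingHomIsometric.norm_map]
  rw [Q_eq_F hr hN, Q_eq_F hr hNc, F, F]
  rw [map_mul, ← Complex.exp_conj, map_prod]
  congr 1
  · apply Finset.prod_congr rfl
    intro n _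
    rw [map_sub, map_one, map_mul, map_pow, Complex.conj_ofReal]
  · congr 1
    rw [← L_conj hr, map_mul, map_pow, Complex.conj_ofReal]
    rw [norm_mul, norm_pow, Complex.norm_real, Real.norm_eq_abs, abs_of_pos (q_pos r)]
    exact hN

end Fprops

section DDdef
variable {r : ℝ}

lemma w_int (m : ℤ) : w (m : ℂ) = 1 := by
  rw [w, show 2 * (Real.pi:ℂ) * I * m = m * (2 * Real.pi * I) by ring,
    Complex.exp_int_mul_two_pi_mul_I]

lemma w_ir (r : ℝ) : w (I * r) = (q r : ℂ) := by
  rw [w, q, Complex.ofReal_exp]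
  congr 1
  rw [show 2 * (Real.pi:ℂ) * I * (I * r) = (2 * Real.pi * r) * (I * I) by ring, Complex.I_mul_I]
  push_cast
  ring

lemma w_conj (z : ℂ) : w ((starRingEnd ℂ) z) = (starRingEnd ℂ) (w (-z)) := by
  rw [w, w, ← Complex.exp_conj]
  congr 1
  have h2 : (starRingEnd ℂ) (2:ℂ) = 2 := by
    rw [show (2:ℂ) = ((2:ℝ):ℂ) by norm_num, Complex.conj_ofReal]
  rw [map_mul, map_mul, map_mul, map_neg, Complex.conj_I, Complex.conj_ofReal, h2]
  ring

lemma w_lattice (r : ℝ) (m k : ℤ) : w ((m : ℂ) + k * (I * r)) = (q r : ℂ) ^ (k : ℤ) := by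
  rw [w_add, w_int, one_mul, w]
  rw [show (2*(Real.pi:ℂ)*I*((k:ℂ)*(I*r))) = (k:ℤ) * (2*(Real.pi:ℂ)*I*(I*(r:ℂ))) by push_cast; ring]
  rw [Complex.exp_int_mul]
  congr 1
  exact w_ir r

/-- The quasi-periodic entire function with simple zeros exactly on the lattice. -/
def DD (r : ℝ) (z : ℂ) : ℂ := (1 - w z) * Q r (w z) * Q r (w (-z))

lemma analyticAt_w (z : ℂ) : AnalyticAt ℂ w z :=
  analyticAt_cexp.comp (analyticAt_const.mul analyticAt_id)

lemma analyticAt_w_neg (z : ℂ) : AnalyticAt ℂ (fun z => w (-z)) z :=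
  (analyticAt_w _).comp analyticAt_id.neg

lemma analyticAt_DD (hr : 0 < r) (z : ℂ) : AnalyticAt ℂ (DD r) z := by
  apply AnalyticAt.mul
  · apply AnalyticAt.mul
    · exact analyticAt_const.sub (analyticAt_w z)
    · exact (analyticAt_Q hr _).comp (analyticAt_w z)
  · exact (analyticAt_Q hr _).comp (analyticAt_w_neg z)

lemma DD_add_one (hr : 0 < r) (z : ℂ) : DD r (z + 1) = DD r z := by
  have h1 : w (z + 1) = w z := by
    rw [show (z + 1 : ℂ) = z + ((1:ℤ):ℂ) by norm_num, w_add, w_int, mul_one]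
  have h2 : w (-(z + 1)) = w (-z) := by
    rw [show (-(z + 1) : ℂ) = -z + ((-1:ℤ):ℂ) by push_cast; ring, w_add, w_int, mul_one]
  rw [DD, DD, h1, h2]

lemma DD_add_ir (hr : 0 < r) (z : ℂ) : DD r (z + I * r) = -(w (-z)) * DD r z := by
  have h1 : w (z + I * r) = (q r : ℂ) * w z := by rw [w_add, w_ir]; ring
  have h2 : (q r : ℂ) * w (-(z + I * r)) = w (-z) := by
    rw [← w_ir r, ← w_add]
    congr 1
    ring
  have h3 : Q r (w (-(z+I*r))) = (1 - w (-z)) * Q r (w (-z)) := by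
    rw [Q_fun_eq hr (w (-(z+I*r))), h2]
  have h4 : Q r (w z) = (1 - (q r:ℂ) * w z) * Q r ((q r:ℂ) * w z) := Q_fun_eq hr (w z)
  have h5 : w z * w (-z) = 1 := w_mul_w_neg z
  rw [DD, DD, h1, h3, h4]
  linear_combination (-(1 - (q r:ℂ)*w z) * Q r ((q r:ℂ)*w z) * Q r (w (-z))) * h5

lemma DD_conj (hr : 0 < r) (z : ℂ) :
    DD r ((starRingEnd ℂ) z) = (starRingEnd ℂ) (-(w (-z)) * DD r z) := by
  have h1 : w ((starRingEnd ℂ) z) = (starRingEnd ℂ) (w (-z)) := w_conj z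
  have h2 : w (-(starRingEnd ℂ) z) = (starRingEnd ℂ) (w z) := by
    rw [show -(starRingEnd ℂ) z = (starRingEnd ℂ) (-z) by rw [map_neg]]
    rw [w_conj, neg_neg]
  have h5 : w z * w (-z) = 1 := w_mul_w_neg z
  rw [DD, h1, h2, Q_conj hr, Q_conj hr]
  rw [show (1 : ℂ) - (starRingEnd ℂ) (w (-z)) = (starRingEnd ℂ) (1 - w (-z)) by
    rw [map_sub, map_one]]
  rw [← map_mul, ← map_mul]
  congr 1
  rw [DD]
  linear_combination (- Q r (w (-z)) * Q r (w z)) * h5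

lemma DD_eq_zero_iff (hr : 0 < r) {z : ℂ} :
    DD r z = 0 ↔ ∃ m k : ℤ, z = (m : ℂ) + k * (I * r) := by
  have hq0 : (0:ℝ) < q r := q_pos r
  have hq1 : q r < 1 := q_lt_one hr
  have hqc : (q r : ℂ) ≠ 0 := Complex.ofReal_ne_zero.mpr hq0.ne'
  constructor
  · intro h
    rw [DD, mul_eq_zero, mul_eq_zero] at h
    rcases h with (h | h) | h
    · rw [sub_eq_zero] at h
      have h' : w z = 1 := h.symm
      rw [w, Complex.exp_eq_one_iff] at h'
      obtain ⟨n, hn⟩ := h'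
      refine ⟨n, 0, ?_⟩
      have hne : (2*(Real.pi:ℂ)*I) ≠ 0 := by
        simp [Complex.ofReal_ne_zero.mpr Real.pi_ne_zero, Complex.I_ne_zero]
      apply mul_left_cancel₀ hne
      push_cast
      linear_combination hn
    · rw [Q_eq_zero_iff hr] at h
      obtain ⟨n, hn⟩ := h
      -- q^(n+1) * w z = 1  ⇒  z = m - (n+1) I r
      have : Complex.exp (-(2*Real.pi*r*(n+1)) + 2*Real.pi*I*z) = 1 := by
        rw [Complex.exp_add, ← w]
        rw [show (-(2*(Real.pi:ℂ)*r*(n+1))) = ((n+1 : ℕ):ℂ) * (-(2*Real.pi*r)) by push_cast; ring]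
        rw [Complex.exp_nat_mul]
        rw [show Complex.exp (-(2*(Real.pi:ℂ)*r)) = (q r : ℂ) by
          rw [q, Complex.ofReal_exp]; push_cast; ring_nf]
        exact hn
      rw [Complex.exp_eq_one_iff] at this
      obtain ⟨m, hm⟩ := this
      refine ⟨m, -(n+1), ?_⟩
      have hI2 : (I:ℂ) * I = -1 := Complex.I_mul_I
      have hne : (2*(Real.pi:ℂ)*I) ≠ 0 := by
        simp [Complex.ofReal_ne_zero.mpr Real.pi_ne_zero, Complex.I_ne_zero]
      apply mul_left_cancel₀ hne
      push_cast at hm ⊢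
      linear_combination hm + (2*(Real.pi:ℂ)*r*((n:ℂ)+1)) * hI2
    · rw [Q_eq_zero_iff hr] at h
      obtain ⟨n, hn⟩ := h
      have : Complex.exp (-(2*Real.pi*r*(n+1)) + 2*Real.pi*I*(-z)) = 1 := by
        rw [Complex.exp_add, ← w]
        rw [show (-(2*(Real.pi:ℂ)*r*(n+1))) = ((n+1 : ℕ):ℂ) * (-(2*Real.pi*r)) by push_cast; ring]
        rw [Complex.exp_nat_mul]
        rw [show Complex.exp (-(2*(Real.pi:ℂ)*r)) = (q r : ℂ) by
          rw [q, Complex.ofReal_exp]; push_cast; ring_nf]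
        exact hn
      rw [Complex.exp_eq_one_iff] at this
      obtain ⟨m, hm⟩ := this
      refine ⟨-m, (n+1), ?_⟩
      have hI2 : (I:ℂ) * I = -1 := Complex.I_mul_I
      have hne : (2*(Real.pi:ℂ)*I) ≠ 0 := by
        simp [Complex.ofReal_ne_zero.mpr Real.pi_ne_zero, Complex.I_ne_zero]
      apply mul_left_cancel₀ hne
      push_cast at hm ⊢
      linear_combination -hm - (2*(Real.pi:ℂ)*r*((n:ℂ)+1)) * hI2
  · rintro ⟨m, k, rfl⟩
    have hw : w ((m:ℂ) + k * (I*r)) = (q r : ℂ) ^ (k:ℤ) := w_lattice r m k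
    have hwn : w (-((m:ℂ) + k * (I*r))) = (q r : ℂ) ^ (-k:ℤ) := by
      rw [show -((m:ℂ) + k * (I*r)) = ((-m : ℤ):ℂ) + ((-k:ℤ):ℂ) * (I*r) by push_cast; ring]
      exact w_lattice r (-m) (-k)
    rcases lt_trichotomy k 0 with hk | hk | hk
    · -- Q r (w z) = 0, with n = (-k-1).toNat
      apply mul_eq_zero_of_left
      apply mul_eq_zero_of_right
      rw [hw, Q_eq_zero_iff hr]
      refine ⟨(-k-1).toNat, ?_⟩
      rw [← zpow_natCast, ← zpow_add₀ hqc]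
      rw [show (((-k-1).toNat + 1 : ℕ) : ℤ) + k = 0 by omega]
      exact zpow_zero _
    · apply mul_eq_zero_of_left
      apply mul_eq_zero_of_left
      rw [hw, hk, sub_eq_zero]
      norm_num
    · apply mul_eq_zero_of_right
      rw [hwn, Q_eq_zero_iff hr]
      refine ⟨(k-1).toNat, ?_⟩
      rw [← zpow_natCast, ← zpow_add₀ hqc]
      rw [show (((k-1).toNat + 1 : ℕ) : ℤ) + -k = 0 by omega]
      exact zpow_zero _

lemma w_zero : w 0 = 1 := by simp [w]

/-- Analytic cofactor in `DD u = u * hh u`. -/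
def hh (r : ℝ) (u : ℂ) : ℂ := (-(dslope w 0 u)) * Q r (w u) * Q r (w (-u))

lemma DD_eq_mul (u : ℂ) : DD r u = u * hh r u := by
  have h := sub_smul_dslope w 0 u
  rw [sub_zero, smul_eq_mul, w_zero] at h
  rw [DD, hh]
  linear_combination (Q r (w u) * Q r (w (-u))) * h

lemma deriv_w_zero : deriv w 0 = 2 * Real.pi * I := by
  have hd : HasDerivAt (fun z : ℂ => 2*(Real.pi:ℂ)*I*z) (2*(Real.pi:ℂ)*I) 0 := by
    simpa using (hasDerivAt_id (0:ℂ)).const_mul (2*(Real.pi:ℂ)*I)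
  have he : HasDerivAt w (Complex.exp (2*(Real.pi:ℂ)*I*0) * (2*Real.pi*I)) 0 :=
    (Complex.hasDerivAt_exp _).comp 0 hd
  rw [he.deriv]
  simp

lemma analyticAt_hh_zero (hr : 0 < r) : AnalyticAt ℂ (hh r) 0 := by
  apply AnalyticAt.mul
  apply AnalyticAt.mul
  · obtain ⟨p, hp⟩ := analyticAt_w 0
    have hds : AnalyticAt ℂ (dslope w 0) 0 := ⟨_, hp.has_fpower_series_dslope_fslope⟩
    exact hds.neg
  · exact (analyticAt_Q hr _).comp (analyticAt_w 0)
  · exact (analyticAt_Q hr _).comp (analyticAt_w_neg 0)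

lemma hh_zero_ne (hr : 0 < r) : hh r 0 ≠ 0 := by
  rw [hh, dslope_same, deriv_w_zero, neg_zero, w_zero]
  apply mul_ne_zero (mul_ne_zero _ (Q_one_ne_zero hr)) (Q_one_ne_zero hr)
  simp [Complex.ofReal_ne_zero.mpr Real.pi_ne_zero, Complex.I_ne_zero]

lemma DD_zero (hr : 0 < r) : DD r 0 = 0 := by rw [DD_eq_mul, zero_mul]

lemma DD_ne_zero_of_re (hr : 0 < r) {z : ℂ} (h : ∀ m : ℤ, z.re ≠ m) : DD r z ≠ 0 := by
  intro hc
  obtain ⟨m, k, hz⟩ := (DD_eq_zero_iff hr).mp hc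
  apply h m
  rw [hz]
  simp

lemma DD_ne_zero_of_im (hr : 0 < r) {z : ℂ} (h : ∀ k : ℤ, z.im ≠ k * r) : DD r z ≠ 0 := by
  intro hc
  obtain ⟨m, k, hz⟩ := (DD_eq_zero_iff hr).mp hc
  apply h k
  rw [hz]
  simp

lemma w_two : w (2 : ℂ) = 1 := by
  rw [show (2:ℂ) = ((2:ℤ):ℂ) by norm_num, w_int]

lemma w_half : w (1/2 : ℂ) = -1 := by
  rw [w, show 2*(Real.pi:ℂ)*I*(1/2) = Real.pi * I by ring, Complex.exp_pi_mul_I]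

/-- Numerator of the elliptic function. -/
def AA (r : ℝ) (z : ℂ) : ℂ := DD r (z - 1/2) ^ 3 * DD r (z - (1 + I*r)/2)

/-- Denominator of the elliptic function. -/
def BB (r : ℝ) (z : ℂ) : ℂ := DD r z ^ 3 * DD r (z - I*r/2)

/-- The elliptic function. -/
def G (r : ℝ) (z : ℂ) : ℂ := I * AA r z / BB r z

lemma analyticAt_AA (hr : 0 < r) (z : ℂ) : AnalyticAt ℂ (AA r) z := by
  apply AnalyticAt.mul
  · exact (((analyticAt_DD hr _).comp (analyticAt_id.sub analyticAt_const)).pow 3)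
  · exact ((analyticAt_DD hr _).comp (analyticAt_id.sub analyticAt_const))

lemma analyticAt_BB (hr : 0 < r) (z : ℂ) : AnalyticAt ℂ (BB r) z := by
  apply AnalyticAt.mul
  · exact ((analyticAt_DD hr _).pow 3)
  · exact ((analyticAt_DD hr _).comp (analyticAt_id.sub analyticAt_const))

lemma AA_half (hr : 0 < r) (z : ℂ) : AA r (z + 1/2) = BB r z := by
  rw [AA, BB, show z + 1/2 - 1/2 = z by ring, show z + 1/2 - (1 + I*r)/2 = z - I*r/2 by ring]

lemma BB_half (hr : 0 < r) (z : ℂ) : BB r (z + 1/2) = AA r z := by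
  rw [BB, AA, show z + 1/2 = (z - 1/2) + 1 by ring,
    show z - 1/2 + 1 - I*r/2 = (z - (1 + I*r)/2) + 1 by ring,
    DD_add_one hr, DD_add_one hr]

lemma AA_add_one (hr : 0 < r) (z : ℂ) : AA r (z + 1) = AA r z := by
  rw [AA, AA, show z + 1 - 1/2 = (z - 1/2) + 1 by ring,
    show z + 1 - (1 + I*r)/2 = (z - (1 + I*r)/2) + 1 by ring, DD_add_one hr, DD_add_one hr]

lemma BB_add_one (hr : 0 < r) (z : ℂ) : BB r (z + 1) = BB r z := by
  rw [BB, BB, show z + 1 - I*r/2 = (z - I*r/2) + 1 by ring, DD_add_one hr, DD_add_one hr]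

lemma G_add_one (hr : 0 < r) (z : ℂ) : G r (z + 1) = G r z := by
  rw [G, G, AA_add_one hr, BB_add_one hr]

lemma AA_add_ir (hr : 0 < r) (z : ℂ) :
    AA r (z + I*r) = w (2 + (-4*z + I*r/2)) * AA r z := by
  rw [AA, AA, show z + I*r - 1/2 = (z - 1/2) + I*r by ring,
    show z + I*r - (1 + I*r)/2 = (z - (1 + I*r)/2) + I*r by ring,
    DD_add_ir hr, DD_add_ir hr,
    show (2 + (-4*z + I*r/2) : ℂ)
      = (-(z-1/2)) + (-(z-1/2)) + (-(z-1/2)) + (-(z-(1+I*r)/2)) by ring,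
    w_add, w_add, w_add]
  ring

lemma BB_add_ir (hr : 0 < r) (z : ℂ) :
    BB r (z + I*r) = w (-4*z + I*r/2) * BB r z := by
  rw [BB, BB, show z + I*r - I*r/2 = (z - I*r/2) + I*r by ring,
    DD_add_ir hr, DD_add_ir hr,
    show (-4*z + I*r/2 : ℂ) = (-z) + (-z) + (-z) + (-(z - I*r/2)) by ring,
    w_add, w_add, w_add]
  ring

lemma G_add_ir (hr : 0 < r) (z : ℂ) : G r (z + I*r) = G r z := by
  rw [G, G, AA_add_ir hr, BB_add_ir hr,
    show (2 + (-4*z + I*r/2) : ℂ) = 2 + (-4*z + I*r/2) by ring, w_add, w_two, one_mul]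
  rw [show I * (w (-4*z + I*r/2) * AA r z) = w (-4*z + I*r/2) * (I * AA r z) by ring]
  exact mul_div_mul_left _ _ (w_ne_zero _)

lemma G_half (hr : 0 < r) (z : ℂ) (hA : AA r z ≠ 0) :
    G r (z + 1/2) = -1 / G r z := by
  rw [G, G, AA_half hr, BB_half hr]
  rcases eq_or_ne (BB r z) 0 with hB | hB
  · rw [hB]
    simp
  · field_simp
    linear_combination Complex.I_mul_I

lemma conj_half : (starRingEnd ℂ) (1/2 : ℂ) = 1/2 := by
  rw [show ((1:ℂ)/2) = (((1:ℝ)/2 : ℝ):ℂ) by norm_num, Complex.conj_ofReal]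

lemma AA_conj (hr : 0 < r) (z : ℂ) :
    AA r ((starRingEnd ℂ) z) = (starRingEnd ℂ) (w (-5*z) * AA r z) := by
  have c1 : (starRingEnd ℂ) z - 1/2 = (starRingEnd ℂ) (z - 1/2) := by
    rw [map_sub, conj_half]
  have c2 : (starRingEnd ℂ) z - (1+I*r)/2 = (starRingEnd ℂ) (z - (1-I*r)/2) := by
    rw [map_sub]
    congr 1
    rw [map_div₀, map_sub, map_one, map_mul, Complex.conj_I, Complex.conj_ofReal,
      show (starRingEnd ℂ) 2 = ((2:ℝ):ℂ) by
        rw [show (2:ℂ) = ((2:ℝ):ℂ) by norm_num, Complex.conj_ofReal]]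
    push_cast
    ring
  rw [AA, c1, c2, DD_conj hr, DD_conj hr,
    show z - (1-I*r)/2 = (z - (1+I*r)/2) + I*r by ring, DD_add_ir hr,
    ← map_pow, ← map_mul]
  congr 1
  have hw5 : w (-(z-1/2))^3 * w (-(z - (1+I*r)/2 + I*r)) * w (-(z-(1+I*r)/2))
      = -(w (-5*z)) := by
    rw [pow_succ, pow_succ, pow_one, ← w_add, ← w_add, ← w_add, ← w_add,
      show (-(z-1/2)) + (-(z-1/2)) + (-(z-1/2)) + (-(z - (1+I*r)/2 + I*r)) + (-(z-(1+I*r)/2))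
        = 1/2 + (2 + (-5*z)) by ring,
      w_add, w_add, w_half, w_two]
    ring
  rw [AA]
  linear_combination (- (DD r (z-1/2))^3 * DD r (z-(1+I*r)/2)) * hw5

lemma BB_conj (hr : 0 < r) (z : ℂ) :
    BB r ((starRingEnd ℂ) z) = (starRingEnd ℂ) (-(w (-5*z)) * BB r z) := by
  have c2 : (starRingEnd ℂ) z - I*r/2 = (starRingEnd ℂ) (z + I*r/2) := by
    rw [map_add]
    congr 1
    rw [map_div₀, map_mul, Complex.conj_I, Complex.conj_ofReal,
      show (starRingEnd ℂ) 2 = ((2:ℝ):ℂ) by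
        rw [show (2:ℂ) = ((2:ℝ):ℂ) by norm_num, Complex.conj_ofReal]]
    push_cast
    ring
  rw [BB, c2, DD_conj hr, DD_conj hr,
    show z + I*r/2 = (z - I*r/2) + I*r by ring, DD_add_ir hr,
    ← map_pow, ← map_mul]
  congr 1
  have hw5 : w (-z)^3 * w (-(z - I*r/2 + I*r)) * w (-(z - I*r/2)) = w (-5*z) := by
    rw [pow_succ, pow_succ, pow_one, ← w_add, ← w_add, ← w_add, ← w_add]
    congr 1
    ring
  rw [BB]
  linear_combination (- (DD r z)^3 * DD r (z - I*r/2)) * hw5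

lemma G_conj (hr : 0 < r) (z : ℂ) : G r ((starRingEnd ℂ) z) = (starRingEnd ℂ) (G r z) := by
  have h2 : (w (-5*z) * AA r z) / (-(w (-5*z)) * BB r z) = -(AA r z / BB r z) := by
    rw [show (-(w (-5*z)) * BB r z) = w (-5*z) * (-(BB r z)) by ring,
      mul_div_mul_left _ _ (w_ne_zero _), div_neg]
  calc G r ((starRingEnd ℂ) z)
      = I * ((starRingEnd ℂ) (w (-5*z) * AA r z) / (starRingEnd ℂ) (-(w (-5*z)) * BB r z)) := by
        rw [G, AA_conj hr, BB_conj hr, mul_div_assoc]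
    _ = I * (starRingEnd ℂ) ((w (-5*z) * AA r z) / (-(w (-5*z)) * BB r z)) := by
        rw [map_div₀]
    _ = I * (starRingEnd ℂ) (-(AA r z / BB r z)) := by rw [h2]
    _ = (starRingEnd ℂ) (G r z) := by
        rw [G, map_neg, map_div₀, mul_div_assoc, map_mul, Complex.conj_I, map_div₀]
        ring

lemma re_mk (a b : ℝ) : ((a:ℂ) + (b:ℝ)*I).re = a := by simp

lemma im_mk (a b : ℝ) : ((a:ℂ) + (b:ℝ)*I).im = b := by simp

lemma not_half_int (k : ℤ) (c : ℝ) (hc : c ≠ 0) : c / 2 ≠ k * c := by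
  intro h
  have h1 : c * (2 * (k:ℝ) - 1) = 0 := by linear_combination (-2) * h
  rcases mul_eq_zero.mp h1 with h2 | h2
  · exact hc h2
  · have h3 : (2 * k : ℝ) = 1 := by linarith
    have : (2 * k : ℤ) = 1 := by exact_mod_cast h3
    omega

lemma DD_ne_ir_half (hr : 0 < r) : DD r (I*r/2) ≠ 0 := by
  apply DD_ne_zero_of_im hr
  intro k
  rw [show (I*(r:ℂ)/2) = ((0:ℝ):ℂ) + ((r/2 : ℝ))*I by push_cast; ring, im_mk]
  exact not_half_int k r hr.ne'

lemma not_neg_half_int (k : ℤ) (c : ℝ) (hc : c ≠ 0) : -(c/2) ≠ k * c := by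
  intro h
  have h1 : c * (2 * (k:ℝ) + 1) = 0 := by linear_combination (-2) * h
  rcases mul_eq_zero.mp h1 with h2 | h2
  · exact hc h2
  · have h3 : (2 * k : ℝ) = -1 := by linarith
    have : (2 * k : ℤ) = -1 := by exact_mod_cast h3
    omega

lemma DD_ne_neg_ir_half (hr : 0 < r) : DD r (-(I*r)/2) ≠ 0 := by
  apply DD_ne_zero_of_im hr
  intro k
  rw [show (-(I*(r:ℂ))/2) = ((0:ℝ):ℂ) + ((-(r/2) : ℝ))*I by push_cast; ring, im_mk]
  exact not_neg_half_int k r hr.ne'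

lemma G_mero (hr : 0 < r) (z : ℂ) : MeromorphicAt (G r) z := by
  exact ((analyticAt_const.mul (analyticAt_AA hr z)).meromorphicAt).div
    (analyticAt_BB hr z).meromorphicAt

lemma G_analytic_of (hr : 0 < r) {z : ℂ} (hB : BB r z ≠ 0) : AnalyticAt ℂ (G r) z :=
  (analyticAt_const.mul (analyticAt_AA hr z)).div (analyticAt_BB hr z) hB

lemma DD_ne_of_re_between (hr : 0 < r) {z : ℂ} (h1 : -1 < z.re) (h2 : z.re < 1)
    (h3 : z.re ≠ 0) : DD r z ≠ 0 := by
  apply DD_ne_zero_of_re hr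
  intro m hm
  have hm1 : (-1:ℝ) < (m:ℝ) := hm ▸ h1
  have hm2 : ((m:ℝ)) < 1 := hm ▸ h2
  have e1 : (-1:ℤ) < m := by exact_mod_cast hm1
  have e2 : m < 1 := by exact_mod_cast hm2
  have : m = 0 := by omega
  rw [this] at hm
  exact h3 (by exact_mod_cast hm)

lemma AA_zero_ne (hr : 0 < r) : AA r 0 ≠ 0 := by
  rw [AA]
  apply mul_ne_zero
  · apply pow_ne_zero
    apply DD_ne_of_re_between hr <;>
      rw [show ((0:ℂ) - 1/2) = ((-1/2 : ℝ):ℂ) + ((0:ℝ))*I by push_cast; ring, re_mk] <;>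
      norm_num
  · apply DD_ne_of_re_between hr <;>
      rw [show ((0:ℂ) - (1+I*r)/2) = ((-1/2 : ℝ):ℂ) + ((-(r/2):ℝ))*I by push_cast; ring, re_mk] <;>
      norm_num

lemma AA_irhalf_ne (hr : 0 < r) : AA r (I*r/2) ≠ 0 := by
  rw [AA]
  apply mul_ne_zero
  · apply pow_ne_zero
    apply DD_ne_of_re_between hr <;>
      rw [show ((I*(r:ℂ)/2) - 1/2) = ((-1/2 : ℝ):ℂ) + ((r/2:ℝ))*I by push_cast; ring, re_mk] <;>
      norm_num
  · apply DD_ne_of_re_between hr <;>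
      rw [show ((I*(r:ℂ)/2) - (1+I*r)/2) = ((-1/2 : ℝ):ℂ) + ((0:ℝ))*I by push_cast; ring, re_mk] <;>
      norm_num

lemma zpow_neg3 (z : ℂ) : z^(-3:ℤ) = (z^(3:ℕ))⁻¹ := by
  rw [← zpow_natCast z 3, ← zpow_neg]
  norm_num

lemma order_G_zero (hr : 0 < r) : meromorphicOrderAt (G r) 0 = (-3 : ℤ) := by
  rw [meromorphicOrderAt_eq_int_iff (G_mero hr 0)]
  refine ⟨fun z => I * AA r z / ((hh r z)^3 * DD r (z - I*r/2)), ?_, ?_, ?_⟩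
  · apply AnalyticAt.div
    · exact analyticAt_const.mul (analyticAt_AA hr 0)
    · exact ((analyticAt_hh_zero hr).pow 3).mul
        ((analyticAt_DD hr _).comp (analyticAt_id.sub analyticAt_const))
    · apply mul_ne_zero (pow_ne_zero _ (hh_zero_ne hr))
      rw [show ((0:ℂ) - I*r/2) = -(I*r)/2 by ring]
      exact DD_ne_neg_ir_half hr
  · apply div_ne_zero
    · exact mul_ne_zero Complex.I_ne_zero (AA_zero_ne hr)
    · apply mul_ne_zero (pow_ne_zero _ (hh_zero_ne hr))
      rw [show ((0:ℂ) - I*r/2) = -(I*r)/2 by ring]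
      exact DD_ne_neg_ir_half hr
  · filter_upwards [self_mem_nhdsWithin] with z hz
    rw [G, BB, show DD r z = z * hh r z from DD_eq_mul z, mul_pow, sub_zero, smul_eq_mul,
      zpow_neg3]
    ring

lemma order_G_irhalf (hr : 0 < r) : meromorphicOrderAt (G r) (I*r/2) = (-1 : ℤ) := by
  rw [meromorphicOrderAt_eq_int_iff (G_mero hr _)]
  have hhalf : AnalyticAt ℂ (fun z => hh r (z - I*r/2)) (I*r/2) := by
    have h0 : AnalyticAt ℂ (hh r) (I*(r:ℂ)/2 - I*r/2) := by
      rw [sub_self]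
      exact analyticAt_hh_zero hr
    exact AnalyticAt.comp (f := fun z : ℂ => z - I*(r:ℂ)/2) h0
      (analyticAt_id.sub analyticAt_const)
  have hDD32 : DD r (I*r/2) ≠ 0 := DD_ne_ir_half hr
  have hhv : hh r (I*r/2 - I*r/2) ≠ 0 := by
    rw [show (I*(r:ℂ)/2 - I*r/2) = 0 by ring]
    exact hh_zero_ne hr
  refine ⟨fun z => I * AA r z / ((DD r z)^3 * hh r (z - I*r/2)), ?_, ?_, ?_⟩
  · apply AnalyticAt.div
    · exact analyticAt_const.mul (analyticAt_AA hr _)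
    · exact ((analyticAt_DD hr _).pow 3).mul hhalf
    · exact mul_ne_zero (pow_ne_zero _ hDD32) hhv
  · apply div_ne_zero
    · exact mul_ne_zero Complex.I_ne_zero (AA_irhalf_ne hr)
    · exact mul_ne_zero (pow_ne_zero _ hDD32) hhv
  · filter_upwards [self_mem_nhdsWithin] with z hz
    rw [G, BB, show DD r (z - I*r/2) = (z - I*r/2) * hh r (z - I*r/2) from DD_eq_mul _,
      smul_eq_mul, zpow_neg_one,
      show DD r z^3 * ((z - I*r/2) * hh r (z - I*r/2))
        = (z - I*r/2) * (DD r z^3 * hh r (z - I*r/2)) by ring,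
      div_mul_eq_div_div_swap, div_eq_inv_mul]

lemma G_add_int (hr : 0 < r) : ∀ (m : ℤ) (z : ℂ), G r (z + m) = G r z := by
  intro m
  induction m using Int.induction_on with
  | zero => intro z; simp
  | succ n ih =>
    intro z
    push_cast
    rw [show z + ((n:ℂ) + 1) = (z + n) + 1 by ring, G_add_one hr]
    have := ih z
    push_cast at this
    exact this
  | pred n ih =>
    intro z
    push_cast
    have h1 := G_add_one hr (z + (-(n:ℂ) - 1))
    rw [show z + (-(n:ℂ) - 1) + 1 = z + -(n:ℂ) by ring] at h1
    have := ih z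
    push_cast at this
    calc G r (z + (-(n:ℂ) - 1)) = G r (z + -(n:ℂ)) := h1.symm
      _ = G r z := this

lemma G_add_int_ir (hr : 0 < r) : ∀ (k : ℤ) (z : ℂ), G r (z + k * (I*r)) = G r z := by
  intro k
  induction k using Int.induction_on with
  | zero => intro z; simp
  | succ n ih =>
    intro z
    push_cast
    rw [show z + ((n:ℂ) + 1) * (I*r) = (z + n * (I*r)) + I*r by ring, G_add_ir hr]
    have := ih z
    push_cast at this
    exact this
  | pred n ih =>
    intro z
    push_cast
    have h1 := G_add_ir hr (z + (-(n:ℂ) - 1) * (I*r))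
    rw [show z + (-(n:ℂ) - 1) * (I*r) + I*r = z + -(n:ℂ) * (I*r) by ring] at h1
    have := ih z
    push_cast at this
    calc G r (z + (-(n:ℂ) - 1) * (I*r)) = G r (z + -(n:ℂ) * (I*r)) := h1.symm
      _ = G r z := this

lemma G_periodic (hr : 0 < r) (z : ℂ) (m k : ℤ) :
    G r (z + ((m:ℂ) + k * (I*r))) = G r z := by
  rw [show z + ((m:ℂ) + k * (I*r)) = (z + k * (I*r)) + m by ring,
    G_add_int hr, G_add_int_ir hr]

lemma not_order_neg_of_analytic {f : ℂ → ℂ} {x : ℂ} (hf : AnalyticAt ℂ f x)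
    (hm : MeromorphicAt f x) : ¬ meromorphicOrderAt f x < 0 :=
  not_lt.mpr hf.meromorphicOrderAt_nonneg

lemma BB_half_ne (hr : 0 < r) : BB r (1/2) ≠ 0 := by
  rw [BB]
  apply mul_ne_zero
  · apply pow_ne_zero
    apply DD_ne_of_re_between hr <;>
      rw [show ((1:ℂ)/2) = ((1/2 : ℝ):ℂ) + ((0:ℝ))*I by push_cast; ring, re_mk] <;> norm_num
  · apply DD_ne_of_re_between hr <;>
      rw [show ((1:ℂ)/2 - I*r/2) = ((1/2 : ℝ):ℂ) + ((-(r/2):ℝ))*I by push_cast; ring, re_mk] <;>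
      norm_num

lemma G_half_val (hr : 0 < r) : G r (1/2) = 0 := by
  have hAA : AA r (1/2) = 0 := by
    rw [AA, show ((1:ℂ)/2 - 1/2) = 0 by ring, DD_zero hr]
    ring
  rw [G, hAA, mul_zero, zero_div]

lemma AA_quarter_ne (hr : 0 < r) : AA r (1/4) ≠ 0 := by
  rw [AA]
  apply mul_ne_zero
  · apply pow_ne_zero
    apply DD_ne_of_re_between hr <;>
      rw [show ((1:ℂ)/4 - 1/2) = ((-1/4 : ℝ):ℂ) + ((0:ℝ))*I by push_cast; ring, re_mk] <;>
      norm_num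
  · apply DD_ne_of_re_between hr <;>
      rw [show ((1:ℂ)/4 - (1+I*r)/2) = ((-1/4 : ℝ):ℂ) + ((-(r/2):ℝ))*I by push_cast; ring,
        re_mk] <;> norm_num

lemma BB_quarter_ne (hr : 0 < r) : BB r (1/4) ≠ 0 := by
  rw [BB]
  apply mul_ne_zero
  · apply pow_ne_zero
    apply DD_ne_of_re_between hr <;>
      rw [show ((1:ℂ)/4) = ((1/4 : ℝ):ℂ) + ((0:ℝ))*I by push_cast; ring, re_mk] <;> norm_num
  · apply DD_ne_of_re_between hr <;>
      rw [show ((1:ℂ)/4 - I*r/2) = ((1/4 : ℝ):ℂ) + ((-(r/2):ℝ))*I by push_cast; ring, re_mk] <;>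
      norm_num

lemma G_quarter_ne (hr : 0 < r) : G r (1/4) ≠ 0 := by
  rw [G]
  exact div_ne_zero (mul_ne_zero Complex.I_ne_zero (AA_quarter_ne hr)) (BB_quarter_ne hr)

lemma lat_re (m k : ℤ) : ((m:ℂ) + (k:ℂ) * (I*(r:ℝ))).re = m := by simp

lemma lat_im (m k : ℤ) : ((m:ℂ) + (k:ℂ) * (I*(r:ℝ))).im = k * r := by simp

end DDdef
end Stmt12

namespace Stmt12
variable {r : ℝ}

lemma order_G_zero' (hr : 0 < r) (h : MeromorphicAt (G r) 0) :
    meromorphicOrderAt (G r) 0 = ((-3 : ℤ) : WithTop ℤ) := order_G_zero hr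

lemma order_G_irhalf' (hr : 0 < r) (h : MeromorphicAt (G r) (I*(r:ℝ)/2)) :
    meromorphicOrderAt (G r) (I*(r:ℝ)/2) = ((-1 : ℤ) : WithTop ℤ) := order_G_irhalf hr

lemma zero_ne_irhalf (hr : 0 < r) : (0:ℂ) ≠ I*(r:ℝ)/2 := by
  intro h
  have h2 := congrArg Complex.im h
  rw [show (I*(r:ℂ)/2) = ((0:ℝ):ℂ) + ((r/2:ℝ))*I by push_cast; ring, im_mk] at h2
  simp at h2
  have : r/2 = 0 := h2.symm
  linarith

end Stmt12

open Stmt12 in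
theorem stmt_12 (r : ℝ) (hr : 0 < r)
    (Γ : Set ℂ) (hΓ : Γ = {z : ℂ | ∃ m n : ℤ, z = m + n * (Complex.I * r)}) :
    ∃ g : ℂ → ℂ, ∃ hg : MeromorphicOn g Set.univ,
      (∃ z w : ℂ, AnalyticAt ℂ g z ∧ AnalyticAt ℂ g w ∧ g z ≠ g w) ∧
      (∀ z : ℂ, ∀ ω ∈ Γ, AnalyticAt ℂ g z → g (z + ω) = g z) ∧
      (∃ P : Finset ℂ,
        (↑P = {z : ℂ | z.re ∈ Set.Ico (0:ℝ) 1 ∧ z.im ∈ Set.Ico (0:ℝ) r ∧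
          meromorphicOrderAt g z < 0}) ∧
        (∑ z ∈ P, (-(WithTop.untopD 0 (meromorphicOrderAt g z))) = 4)) ∧
      (∀ z : ℂ, AnalyticAt ℂ g z → g z ≠ 0 →
        AnalyticAt ℂ g (starRingEnd ℂ z + 1/2) →
        g (starRingEnd ℂ z + 1/2) = -1 / starRingEnd ℂ (g z)) := by
  refine ⟨G r, fun x _ => G_mero hr x, ?_, ?_, ?_, ?_⟩
  · refine ⟨1/2, 1/4, G_analytic_of hr (BB_half_ne hr), G_analytic_of hr (BB_quarter_ne hr), ?_⟩
    rw [G_half_val hr]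
    exact fun h => (G_quarter_ne hr) h.symm
  · intro z ω hω _
    rw [hΓ] at hω
    obtain ⟨m, k, rfl⟩ := hω
    exact G_periodic hr z m k
  · refine ⟨{0, I*(r:ℝ)/2}, ?_, ?_⟩
    · ext z
      simp only [Finset.coe_insert, Finset.coe_singleton, Set.mem_insert_iff,
        Set.mem_singleton_iff, Set.mem_setOf_eq]
      constructor
      · rintro (rfl | rfl)
        · refine ⟨by simp [Set.mem_Ico], by simp [Set.mem_Ico, hr], ?_⟩
          rw [order_G_zero' hr (G_mero hr _)]
          exact_mod_cast (by norm_num : (-3:ℤ) < 0)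
        · refine ⟨?_, ?_, ?_⟩
          · rw [show (I*(r:ℂ)/2) = ((0:ℝ):ℂ) + ((r/2:ℝ))*I by push_cast; ring, re_mk]
            simp [Set.mem_Ico]
          · rw [show (I*(r:ℂ)/2) = ((0:ℝ):ℂ) + ((r/2:ℝ))*I by push_cast; ring, im_mk]
            constructor <;> [positivity; linarith]
          · rw [order_G_irhalf' hr (G_mero hr _)]
            exact_mod_cast (by norm_num : (-1:ℤ) < 0)
      · rintro ⟨h1, h2, h3⟩
        by_cases hB : BB r z = 0
        · rw [BB, mul_eq_zero, pow_eq_zero_iff (by norm_num : (3:ℕ) ≠ 0)] at hB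
          rcases hB with hDD | hDD
          · left
            obtain ⟨m, k, hz⟩ := (DD_eq_zero_iff hr).mp hDD
            rw [hz, lat_re] at h1
            rw [hz, lat_im] at h2
            have hm : m = 0 := by
              obtain ⟨ha, hb⟩ := h1
              have ha' : (0:ℤ) ≤ m := by exact_mod_cast ha
              have hb' : m < 1 := by exact_mod_cast hb
              omega
            have hk : k = 0 := by
              obtain ⟨ha, hb⟩ := h2
              have ha' : (0:ℤ) ≤ k := by
                by_contra hc
                push_neg at hc
                have : (k:ℝ) ≤ -1 := by exact_mod_cast (by omega : k ≤ -1)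
                nlinarith
              have hb' : k < 1 := by
                by_contra hc
                push_neg at hc
                have : (1:ℝ) ≤ (k:ℝ) := by exact_mod_cast hc
                nlinarith
              omega
            rw [hz, hm, hk]
            push_cast
            ring
          · right
            obtain ⟨m, k, hz⟩ := (DD_eq_zero_iff hr).mp hDD
            have hz' : z = ((m:ℝ):ℂ) + ((k*r + r/2 : ℝ))*I := by
              rw [sub_eq_iff_eq_add] at hz
              rw [hz]
              push_cast
              ring
            rw [hz', re_mk] at h1
            rw [hz', im_mk] at h2
            have hm : m = 0 := by
              obtain ⟨ha, hb⟩ := h1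
              have ha' : (0:ℤ) ≤ m := by exact_mod_cast ha
              have hb' : m < 1 := by exact_mod_cast hb
              omega
            have hk : k = 0 := by
              obtain ⟨ha, hb⟩ := h2
              have hk0 : (0:ℤ) ≤ k := by
                by_contra hc
                push_neg at hc
                have hk1 : (k:ℝ) ≤ -1 := by exact_mod_cast (by omega : k ≤ -1)
                nlinarith
              have hk1 : k < 1 := by
                by_contra hc
                push_neg at hc
                have : (1:ℝ) ≤ (k:ℝ) := by exact_mod_cast hc
                nlinarith
              omega
            rw [hz', hm, hk]
            push_cast
            ring
        · exact absurd h3 (not_order_neg_of_analytic (G_analytic_of hr hB) (G_mero hr z))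
    · rw [Finset.sum_insert (by
        rw [Finset.mem_singleton]
        exact zero_ne_irhalf hr), Finset.sum_singleton,
        order_G_zero' hr (G_mero hr _), order_G_irhalf' hr (G_mero hr _)]
      rfl
  · intro z hz1 hz2 hz3
    have hGc : G r ((starRingEnd ℂ) z) ≠ 0 := by
      rw [G_conj hr]
      intro h
      exact hz2 ((starRingEnd ℂ).injective (by rw [h, map_zero]))
    have hA : AA r ((starRingEnd ℂ) z) ≠ 0 := by
      intro h
      apply hGc
      rw [G, h, mul_zero, zero_div]
    rw [G_half hr _ hA, G_conj hr]
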